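/- Let m, r̄, ε > 0, β ≥ 1 and suppose f : [0,1] → ℝ satisfies f(s) ≤ r̄ s^β for 0 ≤ s ≤ 1. Let w(t,x) > 0 solve ∂_t w = (r̄ + ε/2) w^β with ∂_x w = φ w^β for φ = u0'/u0^β, and suppose at a point (t,x) with 0 < w(t,x) < 1 and m ≥ 1 that m|φ'(x)| + m(m+β-1)φ(x)² ≤ ε/2. Then ∂_t w - ∂_{xx}(w^m) - f(w) ≥ 0 at (t,x). -/

import Mathlib

open Real

theorem stmt_18 (m rbar ε β t x : ℝ) (f : ℝ → ℝ) (w : ℝ → ℝ → ℝ) (φ : ℝ → ℝ)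
    (hm : 1 ≤ m) (hr : 0 < rbar) (hε : 0 < ε) (hβ : 1 ≤ β)
    (hf : ∀ s : ℝ, 0 ≤ s → s ≤ 1 → f s ≤ rbar * s ^ β)
    (hφ : Differentiable ℝ φ)
    (hwpos : ∀ y : ℝ, 0 < w t y)
    (hwt : HasDerivAt (fun s => w s x) ((rbar + ε / 2) * w t x ^ β) t)
    (hwx : ∀ y : ℝ, HasDerivAt (fun z => w t z) (φ y * w t y ^ β) y)
    (hwx1 : w t x < 1)
    (hsmall : m * |deriv φ x| + m * (m + β - 1) * φ x ^ 2 ≤ ε / 2) :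
    (rbar + ε / 2) * w t x ^ β - deriv (deriv (fun y => w t y ^ m)) x - f (w t x) ≥ 0 := by
  set W := w t x with hW
  -- first derivative of w^m
  have hd1 : ∀ y : ℝ, HasDerivAt (fun z => w t z ^ m) (m * φ y * w t y ^ (m + β - 1)) y := by
    intro y
    have h := (hwx y).rpow_const (Or.inr hm)
    convert h using 1
    rw [show m + β - 1 = β + (m - 1) by ring, rpow_add (hwpos y)]
    ring
  have hfun : deriv (fun y => w t y ^ m) = fun y => m * φ y * w t y ^ (m + β - 1) := by
    funext y; exact (hd1 y).deriv
  -- second derivative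
  have h2 : HasDerivAt (fun y => m * φ y * w t y ^ (m + β - 1))
      (m * deriv φ x * W ^ (m + β - 1) + m * (m + β - 1) * φ x ^ 2 * W ^ (m + 2 * β - 2)) x := by
    have ha : HasDerivAt (fun y => m * φ y) (m * deriv φ x) x :=
      ((hφ x).hasDerivAt).const_mul m
    have hb : HasDerivAt (fun y => w t y ^ (m + β - 1))
        ((φ x * W ^ β) * (m + β - 1) * W ^ (m + β - 1 - 1)) x :=
      (hwx x).rpow_const (Or.inl (ne_of_gt (hwpos x)))
    have : HasDerivAt (fun y => m * φ y * w t y ^ (m + β - 1)) (m * deriv φ x * W ^ (m + β - 1) + m * φ x * (φ x * W ^ β * (m + β - 1) * W ^ (m + β - 1 - 1))) x := ha.mul hb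
    convert this using 1
    rw [show m + 2 * β - 2 = β + (m + β - 1 - 1) by ring, rpow_add (hwpos x)]
    ring
  have hD2 : deriv (deriv (fun y => w t y ^ m)) x
      = m * deriv φ x * W ^ (m + β - 1) + m * (m + β - 1) * φ x ^ 2 * W ^ (m + 2 * β - 2) := by
    rw [hfun]; exact h2.deriv
  rw [hD2]
  -- inequalities
  have hWpos : 0 < W := hwpos x
  have hW1 : W ≤ 1 := le_of_lt hwx1
  have hβpos : (0:ℝ) < W ^ β := rpow_pos_of_pos hWpos β
  have hE1 : W ^ (m + β - 1) ≤ W ^ β :=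
    rpow_le_rpow_of_exponent_ge hWpos hW1 (by linarith)
  have hE2 : W ^ (m + 2 * β - 2) ≤ W ^ β :=
    rpow_le_rpow_of_exponent_ge hWpos hW1 (by linarith)
  have hP1 : 0 < W ^ (m + β - 1) := rpow_pos_of_pos hWpos _
  have hP2 : 0 < W ^ (m + 2 * β - 2) := rpow_pos_of_pos hWpos _
  have hfW : f W ≤ rbar * W ^ β := hf W (le_of_lt hWpos) hW1
  have habs : deriv φ x ≤ |deriv φ x| := le_abs_self _
  have habs0 : 0 ≤ |deriv φ x| := abs_nonneg _
  have hmpos : (0:ℝ) < m := by linarith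
  have hcoef : 0 ≤ m * (m + β - 1) * φ x ^ 2 := by
    have : (0:ℝ) ≤ m + β - 1 := by linarith
    positivity
  have ht1 : m * deriv φ x * W ^ (m + β - 1) ≤ m * |deriv φ x| * W ^ β := by
    calc m * deriv φ x * W ^ (m + β - 1) ≤ m * |deriv φ x| * W ^ (m + β - 1) := by
          apply mul_le_mul_of_nonneg_right _ (le_of_lt hP1)
          exact mul_le_mul_of_nonneg_left habs (le_of_lt hmpos)
      _ ≤ m * |deriv φ x| * W ^ β := by
          exact mul_le_mul_of_nonneg_left hE1 (mul_nonneg (le_of_lt hmpos) habs0)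
  have ht2 : m * (m + β - 1) * φ x ^ 2 * W ^ (m + 2 * β - 2)
      ≤ m * (m + β - 1) * φ x ^ 2 * W ^ β :=
    mul_le_mul_of_nonneg_left hE2 hcoef
  nlinarith [mul_le_mul_of_nonneg_right hsmall (le_of_lt hβpos)]
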